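/- For n ≥ 3 and s ≥ 1, the equality s·∑_{i=1}^{2n−1} i·(2n−i) − (2n−1)s = s·(2n−1)(4n²+2n−6)/6 holds, and moreover s·C(2n,3) − 2s(n−1) + s·(C(2n−1,2) − 1) + 2s(n−1) + s equals the same quantity; hence equality holds in the Cartan test for the first prolongation of the parabolic 2-Dirac operator. -/

import Mathlib

lemma sum_icc_id (k : ℕ) : ∑ i ∈ Finset.Icc 1 k, (i : ℚ) = k * (k + 1) / 2 := by
  induction k with
  | zero => simp
  | succ m ih =>
    rw [Finset.sum_Icc_succ_top (Nat.one_le_iff_ne_zero.mpr (Nat.succ_ne_zero m)), ih]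
    push_cast; ring

lemma sum_icc_sq (k : ℕ) : ∑ i ∈ Finset.Icc 1 k, (i : ℚ) ^ 2 = k * (k + 1) * (2 * k + 1) / 6 := by
  induction k with
  | zero => simp
  | succ m ih =>
    rw [Finset.sum_Icc_succ_top (Nat.one_le_iff_ne_zero.mpr (Nat.succ_ne_zero m)), ih]
    push_cast; ring

lemma cast_choose_three (a : ℕ) : ((a.choose 3 : ℕ) : ℚ) = a * (a - 1) * (a - 2) / 6 := by
  induction a with
  | zero => simp
  | succ m ih =>
    rw [Nat.choose_succ_succ, Nat.cast_add, ih, Nat.cast_choose_two]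
    push_cast; ring



/-- For `n ≥ 3`, `s ≥ 1`: the weighted Cartan character sum
`s·∑_{i=1}^{2n−1} i(2n−i) − (2n−1)s` equals `s(2n−1)(4n²+2n−6)/6`, and moreover
`s·C(2n,3) − 2s(n−1) + s(C(2n−1,2) − 1) + 2s(n−1) + s` equals the same quantity;
hence equality holds in the Cartan test for the first prolongation of the parabolic
2-Dirac operator. -/
theorem parabolic_cartan_test_equality (n s : ℕ) (hn : 3 ≤ n) (hs : 1 ≤ s) :
    ((s : ℚ) * ∑ i ∈ Finset.Icc 1 (2 * n - 1), (i : ℚ) * (2 * (n : ℚ) - (i : ℚ))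
        - (2 * (n : ℚ) - 1) * (s : ℚ)
      = (s : ℚ) * (2 * (n : ℚ) - 1) * (4 * (n : ℚ) ^ 2 + 2 * (n : ℚ) - 6) / 6)
    ∧ ((s : ℚ) * (((2 * n).choose 3 : ℕ) : ℚ) - 2 * (s : ℚ) * ((n : ℚ) - 1)
        + (s : ℚ) * ((((2 * n - 1).choose 2 : ℕ) : ℚ) - 1) + 2 * (s : ℚ) * ((n : ℚ) - 1) + (s : ℚ)
      = (s : ℚ) * (2 * (n : ℚ) - 1) * (4 * (n : ℚ) ^ 2 + 2 * (n : ℚ) - 6) / 6) := by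

  obtain ⟨m, rfl⟩ : ∃ m, n = m + 3 := ⟨n - 3, by omega⟩
  have h1 : 2 * (m + 3) - 1 = 2 * m + 5 := by omega
  constructor
  · have hsum : ∑ i ∈ Finset.Icc 1 (2 * (m + 3) - 1), (i : ℚ) * (2 * ((m : ℚ) + 3) - (i : ℚ))
        = (2 * ((m : ℚ) + 3)) * ∑ i ∈ Finset.Icc 1 (2 * m + 5), (i : ℚ)
          - ∑ i ∈ Finset.Icc 1 (2 * m + 5), (i : ℚ) ^ 2 := by
      rw [h1, Finset.mul_sum, ← Finset.sum_sub_distrib]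
      exact Finset.sum_congr rfl fun i _ => by push_cast; ring
    push_cast
    rw [hsum, sum_icc_id, sum_icc_sq]
    push_cast; ring
  · rw [h1, cast_choose_three, Nat.cast_choose_two]
    push_cast; ring
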